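/- arXiv:1906.01011 — 4 statements merged into one kernel-verified Lean document; each statement's English description precedes it below -/
import Mathlib

section
/- For the globular coalgebra structure maps on the chains of a globular set, in the case 0 < k = n: ∂(Δ_k x) − (−1)^k Δ_k(∂x) = (1 + (−1)^k T) Δ_{k−1}(x), where x has degree n, Δ_n(x) = x ⊗ x, Δ_{n−1}(x) = t_{n−1}x ⊗ x + (−1)^{(n+1)(n−1)} x ⊗ s_{n−1}x, ∂x = t_{n−1}x − s_{n−1}x, and T is the signed transposition of tensor factors. -/
open TensorProduct

/-- The canonical `Zero` instance on tensor products (stated explicitly to help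
instance synthesis for tensor squares of `Finsupp` modules). -/
noncomputable instance tensorZero {R M N : Type} [CommRing R] [AddCommGroup M]
    [AddCommGroup N] [Module R M] [Module R N] : Zero (TensorProduct R M N) :=
  (inferInstance : AddCommMonoid (TensorProduct R M N)).toZero

/-- A globular set: sets `X n` with source, target and identity (reflexivity) maps
satisfying the globular relations. -/
structure GlobularSet where
  X : ℕ → Type
  s : ∀ n, X (n+1) → X n
  t : ∀ n, X (n+1) → X n
  i : ∀ n, X n → X (n+1)
  glob_tt : ∀ n (x : X (n+2)), t n (t (n+1) x) = t n (s (n+1) x)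
  glob_ss : ∀ n (x : X (n+2)), s n (s (n+1) x) = s n (t (n+1) x)
  t_i : ∀ n (x : X n), t n (i n x) = x
  s_i : ∀ n (x : X n), s n (i n x) = x

namespace GlobularSet

variable (G : GlobularSet)

/-- Iterated target map `X (n + j) → X n`. -/
def tdown : ∀ (j : ℕ) {n : ℕ}, G.X (n + j) → G.X n
  | 0, _, x => x
  | j+1, n, x => tdown j (G.t (n + j) x)

/-- Iterated source map `X (n + j) → X n`. -/
def sdown : ∀ (j : ℕ) {n : ℕ}, G.X (n + j) → G.X n
  | 0, _, x => x
  | j+1, n, x => sdown j (G.s (n + j) x)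

/-- The target map `t_k : X n → X k` for `k ≤ n`. -/
def tgt (k : ℕ) {n : ℕ} (h : k ≤ n) (x : G.X n) : G.X k :=
  G.tdown (n - k) (cast (congrArg G.X (Nat.add_sub_cancel' h).symm) x)

/-- The source map `s_k : X n → X k` for `k ≤ n`. -/
def src (k : ℕ) {n : ℕ} (h : k ≤ n) (x : G.X n) : G.X k :=
  G.sdown (n - k) (cast (congrArg G.X (Nat.add_sub_cancel' h).symm) x)

variable (R : Type) [CommRing R]

/-- The total module of `R`-chains of a globular set (free on all cells; the
degenerate cells span the subspace one quotients by). -/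
abbrev Chains := (Σ n, G.X n) →₀ R

/-- The basis element of the chains corresponding to a cell. -/
noncomputable def el {n : ℕ} (x : G.X n) : Chains G R := Finsupp.single ⟨n, x⟩ 1

/-- The boundary `∂ x = t x - s x` (zero in degree `0`). -/
noncomputable def bdry : Chains G R →ₗ[R] Chains G R :=
  Finsupp.lift _ R _ (fun p =>
    match p with
    | ⟨0, _⟩ => 0
    | ⟨n+1, x⟩ => G.el R (G.t n x) - G.el R (G.s n x))

/-- The Koszul sign operator, multiplying a degree-`n` cell by `(-1)^n`. -/
noncomputable def koszul : Chains G R →ₗ[R] Chains G R :=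
  Finsupp.lift _ R _ (fun p => ((-1 : R)^p.1) • (Finsupp.single p 1 : Chains G R))

/-- The boundary of the tensor square: `∂(a ⊗ b) = ∂a ⊗ b + (-1)^{|a|} a ⊗ ∂b`. -/
noncomputable def bdryTensor :
    Chains G R ⊗[R] Chains G R →ₗ[R] Chains G R ⊗[R] Chains G R :=
  TensorProduct.map (G.bdry R) LinearMap.id + TensorProduct.map (G.koszul R) (G.bdry R)

/-- The signed transposition `T (a ⊗ b) = (-1)^{|a||b|} b ⊗ a`. -/
noncomputable def swapT :
    Chains G R ⊗[R] Chains G R →ₗ[R] Chains G R ⊗[R] Chains G R :=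
  TensorProduct.lift (Finsupp.lift _ R _ (fun p => Finsupp.lift _ R _ (fun q =>
    ((-1 : R)^(p.1 * q.1)) •
      ((Finsupp.single q 1 : Chains G R) ⊗ₜ[R] (Finsupp.single p 1 : Chains G R)))))

/-- The globular coproducts `Δ_k`:  `Δ_k x = 0` if `|x| < k`, `x ⊗ x` if `|x| = k`, and
`t_k x ⊗ x + (-1)^{(|x|+1)k} x ⊗ s_k x` if `k < |x|`. -/
noncomputable def Δ (k : ℕ) : Chains G R →ₗ[R] Chains G R ⊗[R] Chains G R :=
  Finsupp.lift (Chains G R ⊗[R] Chains G R) R (Σ n, G.X n) (fun p =>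
    if h : p.1 < k then (0 : Chains G R ⊗[R] Chains G R)
    else if p.1 = k then (Finsupp.single p 1 : Chains G R) ⊗ₜ[R] (Finsupp.single p 1)
    else
      (G.el R (G.tgt k (Nat.le_of_not_lt h) p.2)) ⊗ₜ[R] (Finsupp.single p 1 : Chains G R)
      + ((-1 : R)^((p.1 + 1) * k)) •
        ((Finsupp.single p 1 : Chains G R) ⊗ₜ[R] (G.el R (G.src k (Nat.le_of_not_lt h) p.2))))

/-- The augmentation `ε`. -/
noncomputable def aug : Chains G R →ₗ[R] R :=
  Finsupp.lift _ R _ (fun p => if p.1 = 0 then (1 : R) else 0)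

end GlobularSet



section Aux
open GlobularSet
variable (G : GlobularSet) (R : Type) [CommRing R] (m : ℕ)

theorem tgt_succ (h : m ≤ m + 1) (x : G.X (m+1)) : G.tgt m h x = G.t m x := by
  have key : ∀ (j : ℕ) (hj : j = 1) (e : m+1 = m + j) (x : G.X (m+1)),
      G.tdown j (cast (congrArg G.X e) x) = G.t m x := by
    rintro j rfl e x
    simp [GlobularSet.tdown]
  unfold GlobularSet.tgt
  exact key _ (by omega) (by omega) x

theorem src_succ (h : m ≤ m + 1) (x : G.X (m+1)) : G.src m h x = G.s m x := by
  have key : ∀ (j : ℕ) (hj : j = 1) (e : m+1 = m + j) (x : G.X (m+1)),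
      G.sdown j (cast (congrArg G.X e) x) = G.s m x := by
    rintro j rfl e x
    simp [GlobularSet.sdown]
  unfold GlobularSet.src
  exact key _ (by omega) (by omega) x

theorem Δ_top (x : G.X (m+1)) : G.Δ R (m+1) (G.el R x) = (G.el R x) ⊗ₜ[R] (G.el R x) := by
  simp [GlobularSet.Δ, GlobularSet.el, Finsupp.lift_apply, Finsupp.sum_single_index]

theorem Δ_sub (x : G.X (m+1)) : G.Δ R m (G.el R x)
    = (G.el R (G.t m x)) ⊗ₜ[R] (G.el R x)
      + ((-1:R)^((m+1+1)*m)) • ((G.el R x) ⊗ₜ[R] (G.el R (G.s m x))) := by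
  simp [GlobularSet.Δ, GlobularSet.el, Finsupp.lift_apply, Finsupp.sum_single_index,
    tgt_succ, src_succ, Nat.lt_irrefl]

theorem Δ_zero (x : G.X m) : G.Δ R (m+1) (G.el R x) = 0 := by
  simp [GlobularSet.Δ, GlobularSet.el, Finsupp.lift_apply, Finsupp.sum_single_index,
    Nat.lt_succ_self]

theorem bdry_el (x : G.X (m+1)) :
    G.bdry R (G.el R x) = G.el R (G.t m x) - G.el R (G.s m x) := by
  simp [GlobularSet.bdry, GlobularSet.el, Finsupp.lift_apply, Finsupp.sum_single_index]

theorem koszul_el {n : ℕ} (x : G.X n) :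
    G.koszul R (G.el R x) = ((-1:R)^n) • G.el R x := by
  simp [GlobularSet.koszul, GlobularSet.el, Finsupp.lift_apply, Finsupp.sum_single_index]
  ext q
  by_cases h : q = ⟨n, x⟩
  · subst h; simp
  · simp [Finsupp.single_eq_of_ne' (Ne.symm h)]

theorem swapT_el {a b : ℕ} (y : G.X a) (z : G.X b) :
    G.swapT R ((G.el R y) ⊗ₜ[R] (G.el R z))
      = ((-1:R)^(a*b)) • ((G.el R z) ⊗ₜ[R] (G.el R y)) := by
  simp [GlobularSet.swapT, GlobularSet.el, Finsupp.lift_apply, Finsupp.sum_single_index]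

theorem neg_one_pow_mod (a b : ℕ) (h : a % 2 = b % 2) : (-1:R)^a = (-1:R)^b := by
  conv_lhs => rw [← Nat.div_add_mod a 2]
  conv_rhs => rw [← Nat.div_add_mod b 2]
  rw [h, pow_add, pow_add, pow_mul, pow_mul]
  norm_num
end Aux

open GlobularSet in
/-- the coherence `∂ Δ_k - (-1)^k Δ_k ∂ = (1 + (-1)^k T) Δ_{k-1}` for the
globular coalgebra in the case `0 < k = n`, for `x` of degree `n = m + 1`. -/
theorem globular_coalgebra_case_k_eq_n
    (G : GlobularSet) (R : Type) [CommRing R] (m : ℕ) (x : G.X (m + 1)) :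
    G.bdryTensor R (G.Δ R (m + 1) (G.el R x))
      - ((-1 : R)^(m + 1)) • G.Δ R (m + 1) (G.bdry R (G.el R x))
    = G.Δ R m (G.el R x) + ((-1 : R)^(m + 1)) • G.swapT R (G.Δ R m (G.el R x)) := by
  have h2 : (-1:R)^(m*(m+1)) = 1 := Even.neg_one_pow (Nat.even_mul_succ_self m)
  have h3 : (-1:R)^((m+1)*m) = 1 := by rw [Nat.mul_comm]; exact h2
  have h1 : (-1:R)^((m+1+1)*m) = (-1:R)^m := by
    rcases Nat.even_or_odd m with h|h
    · rw [(h.mul_left _).neg_one_pow, h.neg_one_pow]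
    · obtain ⟨k, hk⟩ := h
      rw [(Odd.mul ⟨k+1, by omega⟩ ⟨k, hk⟩).neg_one_pow, Odd.neg_one_pow ⟨k, hk⟩]
  rw [Δ_top, bdry_el, map_sub, Δ_zero, Δ_zero, sub_self, smul_zero]
  have hz : ∀ a : Chains G R ⊗[R] Chains G R, a - (0 : Chains G R ⊗[R] Chains G R) = a :=
    fun a => sub_zero a
  rw [hz]
  rw [Δ_sub,
    map_add, map_smul, swapT_el, swapT_el]
  simp only [GlobularSet.bdryTensor, LinearMap.add_apply, TensorProduct.map_tmul,
    LinearMap.id_apply, bdry_el, koszul_el, h1, h2, h3, one_smul]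
  have hm : (-1:R)^(m+1) = -(-1:R)^m := by rw [pow_succ]; ring
  rw [hm]
  rcases Nat.even_or_odd m with h|h <;> rw [h.neg_one_pow] <;>
    simp only [TensorProduct.sub_tmul, TensorProduct.tmul_sub, TensorProduct.smul_tmul',
      TensorProduct.tmul_smul, TensorProduct.neg_tmul, TensorProduct.tmul_neg,
      smul_smul, neg_smul, one_smul, neg_neg] <;>
    module
end

section
/- For the globular coalgebra structure maps on the chains of a globular set, in the case 0 < k < n−1: ∂(Δ_k x) − (−1)^k Δ_k(∂x) = (1 + (−1)^k T) Δ_{k−1}(x), where x has degree n. -/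
open TensorProduct

namespace GlobularSet

variable (G : GlobularSet) (R : Type) [CommRing R]

lemma lift_el {M : Type} [AddCommMonoid M] [Module R M] (f : (Σ n, G.X n) → M)
    {n : ℕ} (x : G.X n) :
    Finsupp.lift M R (Σ n, G.X n) f (G.el R x) = f ⟨n, x⟩ := by
  simp [GlobularSet.el, Finsupp.lift_apply, Finsupp.sum_single_index]

lemma bdry_el (n : ℕ) (x : G.X (n+1)) :
    G.bdry R (G.el R x) = G.el R (G.t n x) - G.el R (G.s n x) := by
  rw [GlobularSet.bdry, G.lift_el R]

lemma koszul_el (n : ℕ) (x : G.X n) :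
    G.koszul R (G.el R x) = ((-1 : R)^n) • G.el R x := by
  rw [GlobularSet.koszul, G.lift_el R]
  rfl

lemma swapT_el {n m : ℕ} (x : G.X n) (y : G.X m) :
    G.swapT R (G.el R x ⊗ₜ[R] G.el R y)
      = ((-1 : R)^(n * m)) • (G.el R y ⊗ₜ[R] G.el R x) := by
  rw [GlobularSet.swapT, TensorProduct.lift.tmul, G.lift_el R]
  rw [G.lift_el R]
  rfl

lemma bdryTensor_tmul (a b : Chains G R) :
    G.bdryTensor R (a ⊗ₜ[R] b)
      = G.bdry R a ⊗ₜ[R] b + G.koszul R a ⊗ₜ[R] G.bdry R b := by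
  simp [GlobularSet.bdryTensor]

end GlobularSet

namespace GlobularSet

variable (G : GlobularSet) (R : Type) [CommRing R]

lemma tdown_cast {c c' n : ℕ} (e : c = c') (h2 : n + c = n + c') (x : G.X (n + c)) :
    G.tdown c' (cast (congrArg G.X h2) x) = G.tdown c x := by
  subst e; rfl

lemma sdown_cast {c c' n : ℕ} (e : c = c') (h2 : n + c = n + c') (x : G.X (n + c)) :
    G.sdown c' (cast (congrArg G.X h2) x) = G.sdown c x := by
  subst e; rfl

lemma tgt_eq (a c : ℕ) {b : ℕ} (h : a ≤ b) (e : b = a + c) (x : G.X b) :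
    G.tgt a h x = G.tdown c (cast (congrArg G.X e) x) := by
  subst e
  show G.tdown (a + c - a) (cast (congrArg G.X (Nat.add_sub_cancel' h).symm) x) = G.tdown c x
  exact G.tdown_cast (Nat.add_sub_cancel_left a c).symm (Nat.add_sub_cancel' h).symm x

lemma src_eq (a c : ℕ) {b : ℕ} (h : a ≤ b) (e : b = a + c) (x : G.X b) :
    G.src a h x = G.sdown c (cast (congrArg G.X e) x) := by
  subst e
  show G.sdown (a + c - a) (cast (congrArg G.X (Nat.add_sub_cancel' h).symm) x) = G.sdown c x
  exact G.sdown_cast (Nat.add_sub_cancel_left a c).symm (Nat.add_sub_cancel' h).symm x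

end GlobularSet

namespace GlobularSet

variable (G : GlobularSet)

lemma tdown_top_t (j n : ℕ) (x : G.X (n + (j+2))) :
    G.tdown (j+1) (G.t (n+(j+1)) x) = G.tdown (j+2) x := rfl

lemma sdown_top_s (j n : ℕ) (x : G.X (n + (j+2))) :
    G.sdown (j+1) (G.s (n+(j+1)) x) = G.sdown (j+2) x := rfl

lemma tdown_top_s (j n : ℕ) (x : G.X (n + (j+2))) :
    G.tdown (j+1) (G.s (n+(j+1)) x) = G.tdown (j+2) x := by
  exact (congrArg (G.tdown j) (G.glob_tt (n+j) x)).symm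

lemma sdown_top_t (j n : ℕ) (x : G.X (n + (j+2))) :
    G.sdown (j+1) (G.t (n+(j+1)) x) = G.sdown (j+2) x := by
  exact (congrArg (G.sdown j) (G.glob_ss (n+j) x)).symm

lemma t_cast {a b : ℕ} (e : a = b) (h2 : a+1 = b+1) (x : G.X (a+1)) :
    G.t b (cast (congrArg G.X h2) x) = cast (congrArg G.X e) (G.t a x) := by
  subst e; rfl

lemma s_cast {a b : ℕ} (e : a = b) (h2 : a+1 = b+1) (x : G.X (a+1)) :
    G.s b (cast (congrArg G.X h2) x) = cast (congrArg G.X e) (G.s a x) := by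
  subst e; rfl

lemma t_tdown : ∀ (j m : ℕ) (h2 : m + (j+1) = (m+1) + j) (x : G.X (m + (j+1))),
    G.t m (G.tdown j (cast (congrArg G.X h2) x)) = G.tdown (j+1) x
  | 0, m, h2, x => rfl
  | j+1, m, h2, x => by
    show G.t m (G.tdown j (G.t ((m+1)+j) (cast (congrArg G.X h2) x)))
        = G.tdown (j+1) (G.t (m+(j+1)) x)
    rw [G.t_cast (show m + (j+1) = (m+1)+j by omega) h2]
    exact t_tdown j m (by omega) (G.t (m+(j+1)) x)

lemma s_tdown : ∀ (j m : ℕ) (h2 : m + (j+1) = (m+1) + j) (x : G.X (m + (j+1))),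
    G.s m (G.tdown j (cast (congrArg G.X h2) x)) = G.sdown (j+1) x
  | 0, m, h2, x => rfl
  | j+1, m, h2, x => by
    show G.s m (G.tdown j (G.t ((m+1)+j) (cast (congrArg G.X h2) x)))
        = G.sdown (j+2) x
    rw [G.t_cast (show m + (j+1) = (m+1)+j by omega) h2]
    rw [s_tdown j m (by omega) (G.t (m+(j+1)) x)]
    exact G.sdown_top_t j m x

lemma t_sdown : ∀ (j m : ℕ) (h2 : m + (j+1) = (m+1) + j) (x : G.X (m + (j+1))),
    G.t m (G.sdown j (cast (congrArg G.X h2) x)) = G.tdown (j+1) x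
  | 0, m, h2, x => rfl
  | j+1, m, h2, x => by
    show G.t m (G.sdown j (G.s ((m+1)+j) (cast (congrArg G.X h2) x)))
        = G.tdown (j+2) x
    rw [G.s_cast (show m + (j+1) = (m+1)+j by omega) h2]
    rw [t_sdown j m (by omega) (G.s (m+(j+1)) x)]
    exact G.tdown_top_s j m x

lemma s_sdown : ∀ (j m : ℕ) (h2 : m + (j+1) = (m+1) + j) (x : G.X (m + (j+1))),
    G.s m (G.sdown j (cast (congrArg G.X h2) x)) = G.sdown (j+1) x
  | 0, m, h2, x => rfl
  | j+1, m, h2, x => by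
    show G.s m (G.sdown j (G.s ((m+1)+j) (cast (congrArg G.X h2) x)))
        = G.sdown (j+2) x
    rw [G.s_cast (show m + (j+1) = (m+1)+j by omega) h2]
    rw [s_sdown j m (by omega) (G.s (m+(j+1)) x)]
    rfl

end GlobularSet

namespace GlobularSet

variable (G : GlobularSet) (R : Type) [CommRing R]

lemma el_cast {a b : ℕ} (e : a = b) (x : G.X a) :
    G.el R (cast (congrArg G.X e) x) = G.el R x := by
  subst e; rfl

lemma Δ_el_tdown (k c : ℕ) (x : G.X (k + (c+1))) :
    G.Δ R k (G.el R x)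
      = G.el R (G.tdown (c+1) x) ⊗ₜ[R] G.el R x
        + ((-1 : R))^((k+(c+1)+1)*k) •
            (G.el R x ⊗ₜ[R] G.el R (G.sdown (c+1) x)) := by
  rw [GlobularSet.Δ, G.lift_el R]
  dsimp only
  rw [dif_neg (by omega), if_neg (by omega)]
  rw [G.tgt_eq k (c+1) (by omega) rfl, G.src_eq k (c+1) (by omega) rfl]
  rfl

end GlobularSet

lemma negpow_eq {R : Type} [CommRing R] {E C D : ℕ} (h : E = C + D) (hD : Even D) :
    (-1:R)^E = (-1)^C := by
  rw [h, pow_add, hD.neg_one_pow, mul_one]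



set_option maxHeartbeats 1000000 in
open GlobularSet in
/-- the coherence `∂ Δ_k - (-1)^k Δ_k ∂ = (1 + (-1)^k T) Δ_{k-1}` for the
globular coalgebra in the case `0 < k < n - 1`, for `x` of degree `n`. -/
theorem globular_coalgebra_case_k_lt_n_sub_one
    (G : GlobularSet) (R : Type) [CommRing R] (k n : ℕ) (hk : 0 < k) (hkn : k + 1 < n)
    (x : G.X n) :
    G.bdryTensor R (G.Δ R k (G.el R x))
      - ((-1 : R)^k) • G.Δ R k (G.bdry R (G.el R x))
    = G.Δ R (k - 1) (G.el R x) + ((-1 : R)^k) • G.swapT R (G.Δ R (k - 1) (G.el R x)) := by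
  obtain ⟨m, rfl⟩ : ∃ m, k = m + 1 := ⟨k - 1, by omega⟩
  obtain ⟨j, rfl⟩ : ∃ j, n = (m+1) + (j+2) := ⟨n - (m+3), by omega⟩
  simp only [Nat.add_sub_cancel]
  have em : (m+1)+(j+2) = m + (j+3) := by omega
  have h2 : m + (j+3) = (m+1) + (j+2) := by omega
  set cx := cast (congrArg G.X em) x with hcx
  have hcc : cast (congrArg G.X h2) cx = x :=
    eq_of_heq ((cast_heq _ _).trans (cast_heq _ _))
  -- Δ_k on x
  have hΔk : G.Δ R (m+1) (G.el R x)
      = G.el R (G.tdown (j+2) x) ⊗ₜ[R] G.el R x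
        + ((-1 : R))^(((m+1)+(j+2)+1)*(m+1)) •
            (G.el R x ⊗ₜ[R] G.el R (G.sdown (j+2) x)) :=
    G.Δ_el_tdown R (m+1) (j+1) x
  -- boundary of x
  have hbx : G.bdry R (G.el R x)
      = G.el R (G.t ((m+1)+(j+1)) x) - G.el R (G.s ((m+1)+(j+1)) x) :=
    G.bdry_el R ((m+1)+(j+1)) x
  -- Δ_k on t x and s x
  have hΔt : G.Δ R (m+1) (G.el R (G.t ((m+1)+(j+1)) x))
      = G.el R (G.tdown (j+2) x) ⊗ₜ[R] G.el R (G.t ((m+1)+(j+1)) x)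
        + ((-1 : R))^(((m+1)+(j+1)+1)*(m+1)) •
            (G.el R (G.t ((m+1)+(j+1)) x) ⊗ₜ[R] G.el R (G.sdown (j+2) x)) := by
    rw [G.Δ_el_tdown R (m+1) j (G.t ((m+1)+(j+1)) x), G.tdown_top_t j (m+1) x,
      G.sdown_top_t j (m+1) x]
  have hΔs : G.Δ R (m+1) (G.el R (G.s ((m+1)+(j+1)) x))
      = G.el R (G.tdown (j+2) x) ⊗ₜ[R] G.el R (G.s ((m+1)+(j+1)) x)
        + ((-1 : R))^(((m+1)+(j+1)+1)*(m+1)) •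
            (G.el R (G.s ((m+1)+(j+1)) x) ⊗ₜ[R] G.el R (G.sdown (j+2) x)) := by
    rw [G.Δ_el_tdown R (m+1) j (G.s ((m+1)+(j+1)) x), G.tdown_top_s j (m+1) x,
      G.sdown_top_s j (m+1) x]
  -- Δ_m on x
  have hΔm : G.Δ R m (G.el R x)
      = G.el R (G.tdown (j+3) cx) ⊗ₜ[R] G.el R x
        + ((-1 : R))^((m+(j+3)+1)*m) •
            (G.el R x ⊗ₜ[R] G.el R (G.sdown (j+3) cx)) := by
    have h := G.Δ_el_tdown R m (j+2) cx
    rw [hcx, G.el_cast R em x] at h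
    exact h
  -- boundary of the degree (m+1) faces
  have hT : G.t m (G.tdown (j+2) x) = G.tdown (j+3) cx := by
    have h3 := G.t_tdown (j+2) m h2 cx
    rwa [hcc] at h3
  have hS : G.s m (G.tdown (j+2) x) = G.sdown (j+3) cx := by
    have h3 := G.s_tdown (j+2) m h2 cx
    rwa [hcc] at h3
  have hT' : G.t m (G.sdown (j+2) x) = G.tdown (j+3) cx := by
    have h3 := G.t_sdown (j+2) m h2 cx
    rwa [hcc] at h3
  have hS' : G.s m (G.sdown (j+2) x) = G.sdown (j+3) cx := by
    have h3 := G.s_sdown (j+2) m h2 cx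
    rwa [hcc] at h3
  have hbt : G.bdry R (G.el R (G.tdown (j+2) x))
      = G.el R (G.tdown (j+3) cx) - G.el R (G.sdown (j+3) cx) := by
    rw [G.bdry_el R m (G.tdown (j+2) x), hT, hS]
  have hbs : G.bdry R (G.el R (G.sdown (j+2) x))
      = G.el R (G.tdown (j+3) cx) - G.el R (G.sdown (j+3) cx) := by
    rw [G.bdry_el R m (G.sdown (j+2) x), hT', hS']
  -- koszul
  have hkT : G.koszul R (G.el R (G.tdown (j+2) x))
      = ((-1:R)^(m+1)) • G.el R (G.tdown (j+2) x) := G.koszul_el R (m+1) _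
  have hkx : G.koszul R (G.el R x)
      = ((-1:R)^((m+1)+(j+2))) • G.el R x := G.koszul_el R ((m+1)+(j+2)) x
  -- swaps
  have hsw1 : G.swapT R (G.el R (G.tdown (j+3) cx) ⊗ₜ[R] G.el R x)
      = ((-1:R)^(m*((m+1)+(j+2)))) • (G.el R x ⊗ₜ[R] G.el R (G.tdown (j+3) cx)) :=
    G.swapT_el R _ _
  have hsw2 : G.swapT R (G.el R x ⊗ₜ[R] G.el R (G.sdown (j+3) cx))
      = ((-1:R)^(((m+1)+(j+2))*m)) • (G.el R (G.sdown (j+3) cx) ⊗ₜ[R] G.el R x) :=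
    G.swapT_el R _ _
  -- sign normalization
  have sgnA : ((-1:R))^(((m+1)+(j+2)+1)*(m+1)) = (-1:R)^(m*j) * (-1)^j := by
    rw [negpow_eq (show ((m+1)+(j+2)+1)*(m+1) = (m*j+j) + (m*(m+1) + (4*m+4)) by ring)
      ((Nat.even_mul_succ_self m).add ⟨2*m+2, by ring⟩), pow_add]
  have sgnB : ((-1:R))^(((m+1)+(j+1)+1)*(m+1)) = (-1:R)^(m*j) * (-1)^j * (-1)^m * (-1) := by
    rw [negpow_eq (show ((m+1)+(j+1)+1)*(m+1) = (m*j+j+m+1) + (m*(m+1) + (2*m+2)) by ring)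
      ((Nat.even_mul_succ_self m).add ⟨m+1, by ring⟩), pow_add, pow_add, pow_add, pow_one]
  have sgnC : ((-1:R))^((m+(j+3)+1)*m) = (-1:R)^(m*j) * (-1)^m := by
    rw [negpow_eq (show (m+(j+3)+1)*m = (m*j+m) + (m*(m+1) + (m+m)) by ring)
      ((Nat.even_mul_succ_self m).add ⟨m, by ring⟩), pow_add]
  have sgnD : ((-1:R))^((m+1)+(j+2)) = (-1:R)^m * (-1)^j * (-1) := by
    rw [negpow_eq (show (m+1)+(j+2) = (m+j+1) + 2 by ring) ⟨1, by ring⟩,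
      pow_add, pow_add, pow_one]
  have sgnE : ((-1:R))^(m+1) = (-1:R)^m * (-1) := pow_succ _ m
  have sgnF : ((-1:R))^(m*((m+1)+(j+2))) = (-1:R)^(m*j) := by
    rw [negpow_eq (show m*((m+1)+(j+2)) = (m*j) + (m*(m+1) + (m+m)) by ring)
      ((Nat.even_mul_succ_self m).add ⟨m, by ring⟩)]
  have sgnF' : ((-1:R))^(((m+1)+(j+2))*m) = (-1:R)^(m*j) := by
    rw [negpow_eq (show ((m+1)+(j+2))*m = (m*j) + (m*(m+1) + (m+m)) by ring)
      ((Nat.even_mul_succ_self m).add ⟨m, by ring⟩)]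
  rw [hΔk, hbx, hΔm]
  simp only [map_add, map_sub, map_smul, G.bdryTensor_tmul R, hΔt, hΔs, hbt, hbs, hbx,
    hkT, hkx, hsw1, hsw2]
  simp only [sgnA, sgnB, sgnC, sgnD, sgnE, sgnF, sgnF']
  simp only [smul_sub, smul_add, TensorProduct.sub_tmul, TensorProduct.tmul_sub,
    TensorProduct.add_tmul, TensorProduct.tmul_add, ← TensorProduct.smul_tmul',
    TensorProduct.tmul_smul, smul_smul]
  match_scalars <;>
    rcases Nat.even_or_odd (m*j) with hu|hu <;>
      rcases Nat.even_or_odd m with hv|hv <;>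
        rcases Nat.even_or_odd j with hw|hw <;>
          simp only [hu.neg_one_pow, hv.neg_one_pow, hw.neg_one_pow] <;>
            ring
end

section
/- Let σ be the top nondegenerate n-simplex of the standard simplicial n-simplex, and over the integers define σ_i^− recursively by σ_n^− = σ and σ_{i}^− = (∂σ_{i+1}^−)^− (the negative part of the boundary in the canonical basis of injective monotone maps). Then σ_i^− = Σ_{U ∈ P(n, n−i), U^− = ∅} d_{U^+} σ for all 0 ≤ i ≤ n. -/
open CategoryTheory

/-- For `U = {u₁ < ⋯ < u_k}`, the subset `U⁻ = {uᵢ ∈ U : uᵢ ≢ i mod 2}` (the index `i`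
of `u ∈ U` being the number of elements of `U` that are `≤ u`). -/
def Uminus {n : ℕ} (U : Finset (Fin (n+1))) : Finset (Fin (n+1)) :=
  U.filter (fun u => ¬ ((u : ℕ) % 2 = (U.filter (fun v => v ≤ u)).card % 2))

/-- For `U = {u₁ < ⋯ < u_k}`, the subset `U⁺ = {uᵢ ∈ U : uᵢ ≡ i mod 2}`. -/
def Uplus {n : ℕ} (U : Finset (Fin (n+1))) : Finset (Fin (n+1)) :=
  U.filter (fun u => (u : ℕ) % 2 = (U.filter (fun v => v ≤ u)).card % 2)

lemma Uminus_subset {n : ℕ} (U : Finset (Fin (n+1))) : Uminus U ⊆ U :=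
  Finset.filter_subset _ _

lemma Uplus_subset {n : ℕ} (U : Finset (Fin (n+1))) : Uplus U ⊆ U :=
  Finset.filter_subset _ _

/-- The composite face map `d_U = d_{u₁} ⋯ d_{u_k}` as a morphism `[m] ⟶ [n]` of the
simplex category: the unique monotone injection whose image is the complement of `U`. -/
def faceHom {n m : ℕ} (U : Finset (Fin (n+1))) (h : m + U.card = n) :
    (SimplexCategory.mk m ⟶ SimplexCategory.mk n) :=
  SimplexCategory.mkHom
    (Uᶜ.orderEmbOfFin
      (by rw [Finset.card_compl, Fintype.card_fin]; omega : Uᶜ.card = m + 1)).toOrderHom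

/-- The total module of integral chains of the standard `n`-simplex (free on all
monotone maps `[m] → [n]`; the boundary of an injective map only involves injective
maps, so the recursion below takes place among the canonical basis of nondegenerate
simplices). -/
abbrev StdChains (n : ℕ) : Type :=
  (Σ m : ℕ, (SimplexCategory.mk m ⟶ SimplexCategory.mk n)) →₀ ℤ

/-- The simplicial boundary `∂ f = ∑_j (-1)^j (δ j ≫ f)`. -/
noncomputable def stdBdry (n : ℕ) : StdChains n →ₗ[ℤ] StdChains n :=
  Finsupp.lift (StdChains n) ℤ _ (fun p =>
    match p with
    | ⟨0, _⟩ => 0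
    | ⟨m+1, f⟩ => ∑ j : Fin (m + 2),
        ((-1 : ℤ)^(j : ℕ)) •
          (Finsupp.single ⟨m, SimplexCategory.δ j ≫ f⟩ 1 : StdChains n))

/-- The negative part `c⁻` of a chain in the canonical basis, so that `c = c⁺ - c⁻`
with `c⁺`, `c⁻` having nonnegative coordinates. -/
noncomputable def negPart (n : ℕ) (c : StdChains n) : StdChains n :=
  c.mapRange (fun z => -(min z 0)) (by simp)

/-- The chains `σ_{n-r}⁻` of Steiner's recursion: `σ_n⁻ = σ` (the top simplex) and
`σ_{i}⁻ = (∂ σ_{i+1}⁻)⁻`. -/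
noncomputable def sigmaNeg (n : ℕ) : ℕ → StdChains n
  | 0 => Finsupp.single ⟨n, 𝟙 (SimplexCategory.mk n)⟩ 1
  | r+1 => negPart n (stdBdry n (sigmaNeg n r))

/-! ### Auxiliary lemmas -/

namespace SteenrodAux

open Finset

lemma card_filter_lt {N : ℕ} (w : Fin N) :
    (univ.filter (fun x : Fin N => x < w)).card = (w : ℕ) := by
  have : univ.filter (fun x : Fin N => x < w) = Finset.Iio w := by
    ext x; simp
  rw [this, Fin.card_Iio]

lemma card_filter_lt_orderEmbOfFin {N k : ℕ} (s : Finset (Fin N)) (h : s.card = k)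
    (j : Fin k) :
    (s.filter (fun x => x < s.orderEmbOfFin h j)).card = (j : ℕ) := by
  classical
  have himg : s.filter (fun x => x < s.orderEmbOfFin h j)
      = (univ.filter (fun i : Fin k => i < j)).image (s.orderEmbOfFin h) := by
    ext x
    simp only [mem_filter, mem_image, mem_univ, true_and]
    constructor
    · rintro ⟨hxs, hxlt⟩
      have : x ∈ Set.range (s.orderEmbOfFin h) := by
        rw [Finset.range_orderEmbOfFin]; exact hxs
      obtain ⟨i, rfl⟩ := this
      exact ⟨i, (s.orderEmbOfFin h).strictMono.lt_iff_lt.mp hxlt, rfl⟩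
    · rintro ⟨i, hij, rfl⟩
      exact ⟨Finset.orderEmbOfFin_mem s h i, (s.orderEmbOfFin h).strictMono hij⟩
  rw [himg, Finset.card_image_of_injective _ (s.orderEmbOfFin h).injective,
    card_filter_lt]

lemma faceHom_inj {n m : ℕ} {U V : Finset (Fin (n+1))} (hU : m + U.card = n)
    (hV : m + V.card = n) (h : faceHom U hU = faceHom V hV) : U = V := by
  have hcU : Uᶜ.card = m + 1 := by rw [Finset.card_compl, Fintype.card_fin]; omega
  have hcV : Vᶜ.card = m + 1 := by rw [Finset.card_compl, Fintype.card_fin]; omega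
  have h1 := congrArg SimplexCategory.Hom.toOrderHom h
  simp only [faceHom, SimplexCategory.mkHom, SimplexCategory.Hom.toOrderHom_mk] at h1
  have hf : ⇑(Uᶜ.orderEmbOfFin hcU) = ⇑(Vᶜ.orderEmbOfFin hcV) :=
    congrArg (fun g : Fin (m+1) →o Fin (n+1) => ⇑g) h1
  have hUV : (↑(Uᶜ) : Set (Fin (n+1))) = ↑(Vᶜ) := by
    rw [← Finset.range_orderEmbOfFin Uᶜ hcU, ← Finset.range_orderEmbOfFin Vᶜ hcV, hf]
  have : Uᶜ = Vᶜ := Finset.coe_injective hUV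
  simpa using congrArg (·ᶜ) this

lemma faceHom_congr {n m : ℕ} {U V : Finset (Fin (n+1))} (h : U = V)
    (hU : m + U.card = n) : faceHom U hU = faceHom V (h ▸ hU) := by
  subst h; rfl

lemma delta_comp_faceHom {n m : ℕ} (U : Finset (Fin (n+1))) (h : m + 1 + U.card = n)
    (j : Fin (m+2)) :
    SimplexCategory.δ j ≫ faceHom U h =
      faceHom (insert (Uᶜ.orderEmbOfFin
        (by rw [Finset.card_compl, Fintype.card_fin]; omega : Uᶜ.card = m + 2) j) U)
        (by
          rw [Finset.card_insert_of_notMem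
            (Finset.mem_compl.mp (Finset.orderEmbOfFin_mem Uᶜ _ j))]
          omega) := by
  classical
  have hUc : Uᶜ.card = m + 2 := by rw [Finset.card_compl, Fintype.card_fin]; omega
  set e := Uᶜ.orderEmbOfFin hUc with he
  set w := e j with hw
  apply SimplexCategory.Hom.ext
  have hwU : w ∉ U := Finset.mem_compl.mp (Finset.orderEmbOfFin_mem Uᶜ hUc j)
  have hcard : ((insert w U)ᶜ).card = m + 1 := by
    rw [Finset.card_compl, Finset.card_insert_of_notMem hwU, Fintype.card_fin]
    omega
  have hkey : (fun x : Fin (m+1) => e (j.succAbove x)) =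
      ⇑(((insert w U)ᶜ).orderEmbOfFin hcard) := by
    refine Finset.orderEmbOfFin_unique hcard ?_ ?_
    · intro x
      simp only [Finset.mem_compl, Finset.mem_insert, not_or]
      refine ⟨fun hxw => (j.succAbove_ne x) (e.injective hxw), ?_⟩
      exact Finset.mem_compl.mp (Finset.orderEmbOfFin_mem Uᶜ hUc (j.succAbove x))
    · exact e.strictMono.comp (Fin.strictMono_succAbove j)
  ext x
  have := congrFun hkey x
  simp only [SimplexCategory.δ, faceHom, SimplexCategory.mkHom,
    SimplexCategory.comp_toOrderHom, SimplexCategory.Hom.toOrderHom_mk] at *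
  simpa using congrArg Fin.val this

lemma faceHom_empty {n : ℕ} (h : n + (∅ : Finset (Fin (n+1))).card = n) :
    faceHom ∅ h = 𝟙 (SimplexCategory.mk n) := by
  apply SimplexCategory.Hom.ext
  have hc : ((∅ : Finset (Fin (n+1)))ᶜ).card = n + 1 := by simp
  have hid : (fun x : Fin (n+1) => x)
      = ⇑(((∅ : Finset (Fin (n+1)))ᶜ).orderEmbOfFin hc) :=
    Finset.orderEmbOfFin_unique hc (fun x => by simp) strictMono_id
  ext x
  simp only [faceHom, SimplexCategory.mkHom, SimplexCategory.Hom.toOrderHom_mk]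
  exact congrArg Fin.val (congrFun hid.symm x)

section Core

variable {n : ℕ} (V : Finset (Fin (n+1)))

def vidx (w : Fin (n+1)) : ℕ := (V.filter (fun v => v ≤ w)).card

def vcnt (w : Fin (n+1)) : ℕ := ((V.erase w)ᶜ.filter (fun x => x < w)).card

variable {V}

lemma vidx_pos {w : Fin (n+1)} (hw : w ∈ V) : 1 ≤ vidx V w :=
  Finset.card_pos.mpr ⟨w, Finset.mem_filter.mpr ⟨hw, le_refl w⟩⟩

lemma filter_le_insert {w : Fin (n+1)} (hw : w ∈ V) :
    V.filter (fun v => v ≤ w) = insert w (V.filter (fun v => v < w)) := by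
  ext x
  simp only [mem_filter, mem_insert]
  constructor
  · rintro ⟨hx, hle⟩
    rcases eq_or_lt_of_le hle with h | h
    · exact Or.inl h
    · exact Or.inr ⟨hx, h⟩
  · rintro (rfl | ⟨hx, hlt⟩)
    · exact ⟨hw, le_refl _⟩
    · exact ⟨hx, le_of_lt hlt⟩

lemma vcnt_add_vidx {w : Fin (n+1)} (hw : w ∈ V) :
    vcnt V w + vidx V w = (w : ℕ) + 1 := by
  have h1 : vidx V w = (V.filter (fun v => v < w)).card + 1 := by
    rw [vidx, filter_le_insert hw, Finset.card_insert_of_notMem (by simp)]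
  have h2 : (V.erase w).filter (fun x => x < w) = V.filter (fun x => x < w) := by
    rw [Finset.filter_erase, Finset.erase_eq_of_notMem (by simp)]
  have huniv : (V.erase w)ᶜ ∪ (V.erase w) = univ := by
    ext x
    by_cases hx : x ∈ V.erase w
    · simp [hx]
    · simp only [Finset.mem_union, Finset.mem_compl, Finset.mem_univ, iff_true]
      exact Or.inl hx
  have h3 : vcnt V w + (V.filter (fun x => x < w)).card = (w : ℕ) := by
    rw [vcnt, ← h2,
      ← Finset.card_union_of_disjoint
        (Finset.disjoint_filter_filter disjoint_compl_left),
      ← Finset.filter_union, huniv, card_filter_lt]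
  omega

lemma vidx_erase {w x : Fin (n+1)} (hw : w ∈ V) (hx : x ∈ V) (hxw : x ≠ w) :
    ((V.erase w).filter (fun v => v ≤ x)).card
      = if w ≤ x then vidx V x - 1 else vidx V x := by
  rw [Finset.filter_erase]
  by_cases h : w ≤ x
  · have hmem : w ∈ V.filter (fun v => v ≤ x) := Finset.mem_filter.mpr ⟨hw, h⟩
    rw [Finset.card_erase_of_mem hmem, if_pos h]; rfl
  · have hnmem : w ∉ V.filter (fun v => v ≤ x) :=
      fun hc => h (Finset.mem_filter.mp hc).2
    rw [Finset.erase_eq_of_notMem hnmem, if_neg h]; rfl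

lemma mem_A_iff {w : Fin (n+1)} :
    (w ∈ V ∧ Uminus (V.erase w) = ∅) ↔
      w ∈ V ∧ (∀ x ∈ V, x < w → (x : ℕ) % 2 = vidx V x % 2)
        ∧ (∀ x ∈ V, w < x → ¬ ((x : ℕ) % 2 = vidx V x % 2)) := by
  constructor
  · rintro ⟨hwV, hU⟩
    rw [Uminus, Finset.filter_eq_empty_iff] at hU
    refine ⟨hwV, fun x hx hlt => ?_, fun x hx hlt => ?_⟩
    · have hmem : x ∈ V.erase w := Finset.mem_erase.mpr ⟨ne_of_lt hlt, hx⟩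
      have := not_not.mp (hU hmem)
      rwa [vidx_erase hwV hx (ne_of_lt hlt), if_neg (not_le.mpr hlt)] at this
    · have hmem : x ∈ V.erase w := Finset.mem_erase.mpr ⟨(ne_of_lt hlt).symm, hx⟩
      have h2 := not_not.mp (hU hmem)
      rw [vidx_erase hwV hx (ne_of_lt hlt).symm, if_pos (le_of_lt hlt)] at h2
      have := vidx_pos hx
      omega
  · rintro ⟨hwV, hP, hQ⟩
    refine ⟨hwV, ?_⟩
    rw [Uminus, Finset.filter_eq_empty_iff]
    intro x hxmem
    obtain ⟨hxw, hx⟩ := Finset.mem_erase.mp hxmem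
    rw [not_not, vidx_erase hwV hx hxw]
    rcases lt_or_gt_of_ne hxw with hlt | hgt
    · rw [if_neg (not_le.mpr hlt)]
      exact hP x hx hlt
    · rw [if_pos (le_of_lt hgt)]
      have h1 := hQ x hx hgt
      have := vidx_pos hx
      omega

lemma Uminus_empty_iff : Uminus V = ∅ ↔ ∀ x ∈ V, (x : ℕ) % 2 = vidx V x % 2 := by
  rw [Uminus, Finset.filter_eq_empty_iff]
  simp only [not_not]
  rfl

lemma Uplus_empty_iff : Uplus V = ∅ ↔ ∀ x ∈ V, ¬ ((x : ℕ) % 2 = vidx V x % 2) := by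
  rw [Uplus, Finset.filter_eq_empty_iff]
  rfl

lemma sign_of_eq {w : Fin (n+1)} (hw : w ∈ V) (h : (w : ℕ) % 2 = vidx V w % 2) :
    ((-1 : ℤ) ^ vcnt V w) = -1 := by
  have h1 := vcnt_add_vidx hw
  have : vcnt V w % 2 = 1 := by omega
  exact Odd.neg_one_pow (Nat.odd_iff.mpr this)

lemma sign_of_ne {w : Fin (n+1)} (hw : w ∈ V) (h : ¬ ((w : ℕ) % 2 = vidx V w % 2)) :
    ((-1 : ℤ) ^ vcnt V w) = 1 := by
  have h1 := vcnt_add_vidx hw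
  have : vcnt V w % 2 = 0 := by omega
  exact Even.neg_one_pow (Nat.even_iff.mpr this)

lemma core_sum (hV : V.Nonempty) :
    ∑ w ∈ V.filter (fun w => Uminus (V.erase w) = ∅), ((-1 : ℤ) ^ vcnt V w)
      = if Uminus V = ∅ then -1 else if Uplus V = ∅ then 1 else 0 := by
  classical
  set A := V.filter (fun w => Uminus (V.erase w) = ∅) with hA
  have memA : ∀ w : Fin (n+1), w ∈ A ↔
      w ∈ V ∧ (∀ x ∈ V, x < w → (x : ℕ) % 2 = vidx V x % 2)
        ∧ (∀ x ∈ V, w < x → ¬ ((x : ℕ) % 2 = vidx V x % 2)) := by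
    intro w
    rw [hA, Finset.mem_filter, mem_A_iff]
  have sep : ∀ a b x : Fin (n+1), a ∈ A → b ∈ A → x ∈ V → a < x → x < b → False := by
    intro a b x ha hb hx hax hxb
    exact ((memA a).mp ha).2.2 x hx hax (((memA b).mp hb).2.1 x hx hxb)
  by_cases hm : Uminus V = ∅
  · have hall := (Uminus_empty_iff).mp hm
    set M := V.max' hV with hM
    have hMV : M ∈ V := V.max'_mem hV
    have hAM : A = {M} := by
      ext w
      rw [memA, Finset.mem_singleton]
      constructor
      · rintro ⟨hwV, hP, hQ⟩
        by_contra hne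
        have hlt : w < M := lt_of_le_of_ne (V.le_max' w hwV) hne
        exact hQ M hMV hlt (hall M hMV)
      · rintro rfl
        exact ⟨hMV, fun x hx _ => hall x hx,
          fun x hx hlt => absurd (V.le_max' x hx) (not_le.mpr hlt)⟩
    rw [hAM, Finset.sum_singleton, if_pos hm, sign_of_eq hMV (hall M hMV)]
  · by_cases hp : Uplus V = ∅
    · have hall := (Uplus_empty_iff).mp hp
      set M := V.min' hV with hM
      have hMV : M ∈ V := V.min'_mem hV
      have hAM : A = {M} := by
        ext w
        rw [memA, Finset.mem_singleton]
        constructor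
        · rintro ⟨hwV, hP, hQ⟩
          by_contra hne
          have hlt : M < w := lt_of_le_of_ne (V.min'_le w hwV) (Ne.symm hne)
          exact hall M hMV (hP M hMV hlt)
        · rintro rfl
          exact ⟨hMV, fun x hx hlt => absurd (V.min'_le x hx) (not_le.mpr hlt),
            fun x hx _ => hall x hx⟩
      rw [hAM, Finset.sum_singleton, if_neg hm, if_pos hp, sign_of_ne hMV (hall M hMV)]
    · rw [if_neg hm, if_neg hp]
      rcases Finset.eq_empty_or_nonempty A with hA0 | ⟨w, hwA⟩
      · rw [hA0, Finset.sum_empty]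
      obtain ⟨hwV, hP, hQ⟩ := (memA w).mp hwA
      by_cases hw : (w : ℕ) % 2 = vidx V w % 2
      · have hwM : w ≠ V.max' hV := by
          rintro h
          apply hm
          rw [Uminus_empty_iff]
          intro x hx
          rcases lt_trichotomy x w with hlt | rfl | hgt
          · exact hP x hx hlt
          · exact hw
          · exact absurd (V.le_max' x hx) (not_le.mpr (h ▸ hgt))
        have hTne : (V.filter (fun x => w < x)).Nonempty :=
          ⟨V.max' hV, Finset.mem_filter.mpr ⟨V.max'_mem hV,
            lt_of_le_of_ne (V.le_max' w hwV) hwM⟩⟩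
        set w' := (V.filter (fun x => w < x)).min' hTne with hw'
        have hw'mem := (V.filter (fun x => w < x)).min'_mem hTne
        obtain ⟨hw'V, hww'⟩ := Finset.mem_filter.mp hw'mem
        have hbetween : ∀ x ∈ V, w < x → w' ≤ x := fun x hx hlt =>
          (V.filter (fun x => w < x)).min'_le x (Finset.mem_filter.mpr ⟨hx, hlt⟩)
        have hw'par : ¬ ((w' : ℕ) % 2 = vidx V w' % 2) := hQ w' hw'V hww'
        have hw'A : w' ∈ A := by
          rw [memA]
          refine ⟨hw'V, fun x hx hlt => ?_, fun x hx hlt => hQ x hx (lt_trans hww' hlt)⟩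
          rcases lt_trichotomy x w with h | rfl | h
          · exact hP x hx h
          · exact hw
          · exact absurd (hbetween x hx h) (not_le.mpr hlt)
        have hsub : A = {w, w'} := by
          ext u
          simp only [Finset.mem_insert, Finset.mem_singleton]
          constructor
          · intro huA
            have huV := ((memA u).mp huA).1
            by_contra hc
            push_neg at hc
            obtain ⟨hc1, hc2⟩ := hc
            rcases lt_trichotomy u w with h | rfl | h
            · exact sep u w' w huA hw'A hwV h hww'
            · exact hc1 rfl
            · rcases lt_trichotomy u w' with h2 | rfl | h2
              · exact absurd (hbetween u huV h) (not_le.mpr h2)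
              · exact hc2 rfl
              · exact sep w u w' hwA huA hw'V hww' h2
          · rintro (rfl | rfl)
            · exact hwA
            · exact hw'A
        rw [hsub, Finset.sum_pair (ne_of_lt hww'), sign_of_eq hwV hw,
          sign_of_ne hw'V hw'par]
        ring
      · have hwm : w ≠ V.min' hV := by
          rintro h
          apply hp
          rw [Uplus_empty_iff]
          intro x hx
          rcases lt_trichotomy x w with hlt | rfl | hgt
          · exact absurd (V.min'_le x hx) (not_le.mpr (h ▸ hlt))
          · exact hw
          · exact hQ x hx hgt
        have hTne : (V.filter (fun x => x < w)).Nonempty :=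
          ⟨V.min' hV, Finset.mem_filter.mpr ⟨V.min'_mem hV,
            lt_of_le_of_ne (V.min'_le w hwV) (Ne.symm hwm)⟩⟩
        set w' := (V.filter (fun x => x < w)).max' hTne with hw'
        have hw'mem := (V.filter (fun x => x < w)).max'_mem hTne
        obtain ⟨hw'V, hww'⟩ := Finset.mem_filter.mp hw'mem
        have hbetween : ∀ x ∈ V, x < w → x ≤ w' := fun x hx hlt =>
          (V.filter (fun x => x < w)).le_max' x (Finset.mem_filter.mpr ⟨hx, hlt⟩)
        have hw'par : (w' : ℕ) % 2 = vidx V w' % 2 := hP w' hw'V hww'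
        have hw'A : w' ∈ A := by
          rw [memA]
          refine ⟨hw'V, fun x hx hlt => hP x hx (lt_trans hlt hww'), fun x hx hlt => ?_⟩
          rcases lt_trichotomy x w with h | rfl | h
          · exact absurd (hbetween x hx h) (not_le.mpr hlt)
          · exact hw
          · exact hQ x hx h
        have hsub : A = {w', w} := by
          ext u
          simp only [Finset.mem_insert, Finset.mem_singleton]
          constructor
          · intro huA
            have huV := ((memA u).mp huA).1
            by_contra hc
            push_neg at hc
            obtain ⟨hc1, hc2⟩ := hc
            rcases lt_trichotomy u w with h | rfl | h
            · rcases lt_trichotomy u w' with h2 | rfl | h2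
              · exact sep u w w' huA hwA hw'V h2 hww'
              · exact hc1 rfl
              · exact absurd (hbetween u huV h) (not_le.mpr h2)
            · exact hc2 rfl
            · exact sep w' u w hw'A huA hwV hww' h
          · rintro (rfl | rfl)
            · exact hw'A
            · exact hwA
        rw [hsub, Finset.sum_pair (ne_of_lt hww'), sign_of_eq hw'V hw'par,
          sign_of_ne hwV hw]
        ring

end Core


lemma bdry_single {n m : ℕ} (f : SimplexCategory.mk (m+1) ⟶ SimplexCategory.mk n) :
    stdBdry n (Finsupp.single ⟨m+1, f⟩ 1) =
      ∑ j : Fin (m + 2),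
        ((-1 : ℤ)^(j : ℕ)) •
          (Finsupp.single ⟨m, SimplexCategory.δ j ≫ f⟩ 1 : StdChains n) := by
  rw [stdBdry, Finsupp.lift_apply, Finsupp.sum_single_index (by simp), one_smul]


noncomputable def steenrodSum (n r m : ℕ) (hm : m + r = n) : StdChains n :=
  ∑ U : Finset (Fin (n+1)),
    if h : U.card = r ∧ Uminus U = ∅ then
      Finsupp.single
        (⟨m, faceHom U (by omega : m + U.card = n)⟩ :
          Σ m' : ℕ, (SimplexCategory.mk m' ⟶ SimplexCategory.mk n))
        (1 : ℤ)
    else 0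

lemma key {n m r : ℕ} (hm : m + 1 + r = n)
    (p : Σ m' : ℕ, (SimplexCategory.mk m' ⟶ SimplexCategory.mk n))
    (V : Finset (Fin (n+1))) (hc : V.card = r + 1)
    (hbV : (⟨m, faceHom V (by omega : m + V.card = n)⟩ :
      Σ m' : ℕ, (SimplexCategory.mk m' ⟶ SimplexCategory.mk n)) = p)
    (U : Finset (Fin (n+1))) :
    (stdBdry n (if h : U.card = r ∧ Uminus U = ∅ then
        Finsupp.single
          (⟨m+1, faceHom U (by omega : m + 1 + U.card = n)⟩ :
            Σ m' : ℕ, (SimplexCategory.mk m' ⟶ SimplexCategory.mk n)) (1:ℤ)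
      else 0)) p
      = ∑ w ∈ V.filter (fun w => Uminus (V.erase w) = ∅),
          if V.erase w = U then (-1 : ℤ) ^ vcnt V w else 0 := by
  classical
  by_cases hU : U.card = r ∧ Uminus U = ∅
  · rw [dif_pos hU]
    have hUn : m + 1 + U.card = n := by omega
    have hUc : Uᶜ.card = m + 2 := by
      rw [Finset.card_compl, Fintype.card_fin]; omega
    have hicard : ∀ j : Fin (m+2),
        m + (insert (Uᶜ.orderEmbOfFin hUc j) U).card = n := by
      intro j
      rw [Finset.card_insert_of_notMem
        (Finset.mem_compl.mp (Finset.orderEmbOfFin_mem Uᶜ hUc j))]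
      omega
    have hinsV : ∀ j : Fin (m+2),
        ((⟨m, faceHom (insert (Uᶜ.orderEmbOfFin hUc j) U) (hicard j)⟩ :
          Σ m' : ℕ, (SimplexCategory.mk m' ⟶ SimplexCategory.mk n)) = p) →
        insert (Uᶜ.orderEmbOfFin hUc j) U = V := by
      intro j hEq
      rw [← hbV] at hEq
      exact faceHom_inj (hicard j) (by omega)
        (eq_of_heq (Sigma.mk.inj_iff.mp hEq).2)
    rw [bdry_single, Finsupp.finset_sum_apply]
    simp only [Finsupp.smul_apply, delta_comp_faceHom U hUn]
    by_cases hsub : ∃ w ∈ V.filter (fun w => Uminus (V.erase w) = ∅), V.erase w = U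
    · obtain ⟨w₀, hw₀A, hw₀U⟩ := hsub
      obtain ⟨hw₀V, hw₀m⟩ := Finset.mem_filter.mp hw₀A
      have hw₀c : w₀ ∈ Uᶜ := by
        rw [← hw₀U]; simp
      have hexj : ∃ j₀ : Fin (m+2), Uᶜ.orderEmbOfFin hUc j₀ = w₀ := by
        have : w₀ ∈ Set.range (Uᶜ.orderEmbOfFin hUc) := by
          rw [Finset.range_orderEmbOfFin]; exact hw₀c
        exact this
      obtain ⟨j₀, hj₀⟩ := hexj
      have hins : insert (Uᶜ.orderEmbOfFin hUc j₀) U = V := by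
        rw [hj₀, ← hw₀U, Finset.insert_erase hw₀V]
      have hRHS : (∑ w ∈ V.filter (fun w => Uminus (V.erase w) = ∅),
          if V.erase w = U then (-1 : ℤ) ^ vcnt V w else 0)
          = (-1 : ℤ) ^ vcnt V w₀ := by
        rw [Finset.sum_eq_single_of_mem w₀ hw₀A]
        · rw [if_pos hw₀U]
        · intro w hw hne
          rw [if_neg]
          intro hEq
          exact hne ((Finset.erase_inj V (Finset.mem_filter.mp hw).1).mp
            (hEq.trans hw₀U.symm))
      rw [hRHS]
      rw [Finset.sum_eq_single j₀]
      · have hq : (⟨m, faceHom (insert (Uᶜ.orderEmbOfFin hUc j₀) U) (hicard j₀)⟩ :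
            Σ m' : ℕ, (SimplexCategory.mk m' ⟶ SimplexCategory.mk n)) = p := by
          rw [← hbV]
          exact Sigma.ext rfl (heq_of_eq (faceHom_congr hins (hicard j₀)))
        have h1 : (Finsupp.single
            (⟨m, faceHom (insert (Uᶜ.orderEmbOfFin hUc j₀) U) (hicard j₀)⟩ :
              Σ m' : ℕ, (SimplexCategory.mk m' ⟶ SimplexCategory.mk n)) (1:ℤ)) p = 1 := by
          rw [← hq]; exact Finsupp.single_eq_same
        have hval : (j₀ : ℕ) = vcnt V w₀ := by
          rw [vcnt, hw₀U, ← hj₀]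
          exact (card_filter_lt_orderEmbOfFin Uᶜ hUc j₀).symm
        rw [h1, smul_eq_mul, mul_one, hval]
      · intro j _ hne
        have h0 : (Finsupp.single
            (⟨m, faceHom (insert (Uᶜ.orderEmbOfFin hUc j) U) (hicard j)⟩ :
              Σ m' : ℕ, (SimplexCategory.mk m' ⟶ SimplexCategory.mk n)) (1:ℤ)) p = 0 := by
          apply Finsupp.single_eq_of_ne'
          intro hEq
          have h2 := hinsV j hEq
          have hjw : Uᶜ.orderEmbOfFin hUc j = w₀ := by
            have hmem : Uᶜ.orderEmbOfFin hUc j ∈ V := by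
              rw [← h2]; exact Finset.mem_insert_self _ _
            have herU : V.erase (Uᶜ.orderEmbOfFin hUc j) = U := by
              conv_lhs => rw [← h2]
              exact Finset.erase_insert
                (Finset.mem_compl.mp (Finset.orderEmbOfFin_mem Uᶜ hUc j))
            exact (Finset.erase_inj V hmem).mp (herU.trans hw₀U.symm)
          exact hne ((Uᶜ.orderEmbOfFin hUc).injective (hjw.trans hj₀.symm))
        rw [h0, smul_zero]
      · intro h; exact absurd (Finset.mem_univ j₀) h
    · rw [Finset.sum_eq_zero, Finset.sum_eq_zero]
      · intro w hw
        rw [if_neg]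
        intro hEq
        exact hsub ⟨w, hw, hEq⟩
      · intro j _
        have h0 : (Finsupp.single
            (⟨m, faceHom (insert (Uᶜ.orderEmbOfFin hUc j) U) (hicard j)⟩ :
              Σ m' : ℕ, (SimplexCategory.mk m' ⟶ SimplexCategory.mk n)) (1:ℤ)) p = 0 := by
          apply Finsupp.single_eq_of_ne'
          intro hEq
          have h2 := hinsV j hEq
          set w := Uᶜ.orderEmbOfFin hUc j with hwdef
          have herU : V.erase w = U := by
            conv_lhs => rw [← h2]
            exact Finset.erase_insert
              (Finset.mem_compl.mp (Finset.orderEmbOfFin_mem Uᶜ hUc j))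
          refine hsub ⟨w, ?_, herU⟩
          rw [Finset.mem_filter]
          refine ⟨?_, ?_⟩
          · rw [← h2]; exact Finset.mem_insert_self _ _
          · rw [herU]; exact hU.2
        rw [h0, smul_zero]
  · rw [dif_neg hU, map_zero]
    rw [Finsupp.coe_zero, Pi.zero_apply]
    symm
    apply Finset.sum_eq_zero
    intro w hw
    rw [if_neg]
    intro hEq
    apply hU
    refine ⟨?_, ?_⟩
    · rw [← hEq, Finset.card_erase_of_mem (Finset.mem_filter.mp hw).1, hc]
      omega
    · rw [← hEq]; exact (Finset.mem_filter.mp hw).2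

lemma key0 {n m r : ℕ} (hm : m + 1 + r = n)
    (p : Σ m' : ℕ, (SimplexCategory.mk m' ⟶ SimplexCategory.mk n))
    (hex : ∀ (V : Finset (Fin (n+1))), V.card = r + 1 →
      ∀ (hcc : m + V.card = n),
      (⟨m, faceHom V hcc⟩ :
        Σ m' : ℕ, (SimplexCategory.mk m' ⟶ SimplexCategory.mk n)) ≠ p)
    (U : Finset (Fin (n+1))) :
    (stdBdry n (if h : U.card = r ∧ Uminus U = ∅ then
        Finsupp.single
          (⟨m+1, faceHom U (by omega : m + 1 + U.card = n)⟩ :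
            Σ m' : ℕ, (SimplexCategory.mk m' ⟶ SimplexCategory.mk n)) (1:ℤ)
      else 0)) p = 0 := by
  classical
  by_cases hU : U.card = r ∧ Uminus U = ∅
  · rw [dif_pos hU]
    have hUn : m + 1 + U.card = n := by omega
    have hUc : Uᶜ.card = m + 2 := by
      rw [Finset.card_compl, Fintype.card_fin]; omega
    have hicard : ∀ j : Fin (m+2),
        m + (insert (Uᶜ.orderEmbOfFin hUc j) U).card = n := by
      intro j
      rw [Finset.card_insert_of_notMem
        (Finset.mem_compl.mp (Finset.orderEmbOfFin_mem Uᶜ hUc j))]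
      omega
    rw [bdry_single, Finsupp.finset_sum_apply]
    simp only [Finsupp.smul_apply, delta_comp_faceHom U hUn]
    apply Finset.sum_eq_zero
    intro j _
    have hcins : (insert (Uᶜ.orderEmbOfFin hUc j) U).card = r + 1 := by
      rw [Finset.card_insert_of_notMem
        (Finset.mem_compl.mp (Finset.orderEmbOfFin_mem Uᶜ hUc j))]
      omega
    have h0 : (Finsupp.single
        (⟨m, faceHom (insert (Uᶜ.orderEmbOfFin hUc j) U) (hicard j)⟩ :
          Σ m' : ℕ, (SimplexCategory.mk m' ⟶ SimplexCategory.mk n)) (1:ℤ)) p = 0 :=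
      Finsupp.single_eq_of_ne' (hex _ hcins (hicard j))
    rw [h0, smul_zero]
  · rw [dif_neg hU, map_zero]
    rfl

lemma main' {n : ℕ} : ∀ (r m : ℕ) (hm : m + r = n),
    sigmaNeg n r = steenrodSum n r m hm
  | 0, m, hm => by
    obtain rfl : m = n := by omega
    simp only [sigmaNeg]
    rw [steenrodSum,
      Finset.sum_eq_single_of_mem (∅ : Finset (Fin (m+1))) (Finset.mem_univ _)
        (fun U _ hne => dif_neg (fun hcc => hne (Finset.card_eq_zero.mp hcc.1))),
      dif_pos ⟨Finset.card_empty, by simp [Uminus]⟩, faceHom_empty]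
  | (r+1), m, hm => by
    have hm' : (m + 1) + r = n := by omega
    have IH := main' r (m+1) hm'
    show _root_.negPart n (stdBdry n (sigmaNeg n r)) = steenrodSum n (r+1) m hm
    rw [IH]
    ext p
    simp only [_root_.negPart, Finsupp.mapRange_apply]
    by_cases hex : ∃ V : Finset (Fin (n+1)), ∃ _ : V.card = r + 1,
        ∃ hcc : m + V.card = n,
        (⟨m, faceHom V hcc⟩ :
          Σ m' : ℕ, (SimplexCategory.mk m' ⟶ SimplexCategory.mk n)) = p
    · obtain ⟨V, hcV, hcc, hbV⟩ := hex
      have hVne : V.Nonempty := Finset.card_pos.mp (by omega)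
      have hbV' : (⟨m, faceHom V (by omega : m + V.card = n)⟩ :
          Σ m' : ℕ, (SimplexCategory.mk m' ⟶ SimplexCategory.mk n)) = p := hbV
      have hL : (stdBdry n (steenrodSum n r (m+1) hm')) p
          = (if Uminus V = ∅ then (-1 : ℤ) else if Uplus V = ∅ then 1 else 0) := by
        rw [steenrodSum, map_sum, Finsupp.finset_sum_apply,
          Finset.sum_congr rfl (fun U _ => key hm' p V hcV hbV' U),
          Finset.sum_comm,
          Finset.sum_congr rfl (fun w _ => Finset.sum_ite_eq Finset.univ (V.erase w)
            (fun _ => (-1 : ℤ) ^ vcnt V w)),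
          Finset.sum_congr rfl (fun w _ => if_pos (Finset.mem_univ _)),
          core_sum hVne]
      have hR : (steenrodSum n (r+1) m hm) p
          = (if Uminus V = ∅ then (1 : ℤ) else 0) := by
        rw [steenrodSum, Finsupp.finset_sum_apply,
          Finset.sum_eq_single_of_mem V (Finset.mem_univ V) ?other]
        case other =>
          intro V' _ hne
          by_cases hc' : V'.card = r + 1 ∧ Uminus V' = ∅
          · rw [dif_pos hc']
            apply Finsupp.single_eq_of_ne'
            intro hEq
            rw [← hbV'] at hEq
            exact hne (faceHom_inj _ _ (eq_of_heq (Sigma.mk.inj_iff.mp hEq).2))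
          · rw [dif_neg hc']
            rfl
        by_cases hUm : Uminus V = ∅
        · rw [dif_pos ⟨hcV, hUm⟩, if_pos hUm, ← hbV']
          exact Finsupp.single_eq_same
        · rw [dif_neg (fun hcc2 => hUm hcc2.2), if_neg hUm]
          rfl
      rw [hL, hR]
      split_ifs <;> norm_num
    · push_neg at hex
      have hL0 : (stdBdry n (steenrodSum n r (m+1) hm')) p = 0 := by
        rw [steenrodSum, map_sum, Finsupp.finset_sum_apply]
        exact Finset.sum_eq_zero (fun U _ => key0 hm' p (fun V hcV hcc => hex V hcV hcc) U)
      have hR0 : (steenrodSum n (r+1) m hm) p = 0 := by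
        rw [steenrodSum, Finsupp.finset_sum_apply]
        apply Finset.sum_eq_zero
        intro V _
        by_cases hc' : V.card = r + 1 ∧ Uminus V = ∅
        · rw [dif_pos hc']
          exact Finsupp.single_eq_of_ne' (hex V hc'.1 _)
        · rw [dif_neg hc']
          rfl
      rw [hL0, hR0]
      norm_num

end SteenrodAux

/-- for the top simplex `σ` of the standard `n`-simplex, the recursively
defined chains `σ_i⁻` (`σ_n⁻ = σ`, `σ_i⁻ = (∂ σ_{i+1}⁻)⁻`) are given by Steenrod's
formula: `σ_{n-r}⁻ = ∑_{U ∈ P(n,r), U⁻ = ∅} d_{U⁺} σ` for all `r ≤ n` (note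
`U⁺ = U` when `U⁻ = ∅`). -/
theorem sigmaNeg_eq_steenrod_sum (n : ℕ) (r : ℕ) (hr : r ≤ n) :
    sigmaNeg n r =
      ∑ U : Finset (Fin (n+1)),
        if h : U.card = r ∧ Uminus U = ∅ then
          Finsupp.single
            (⟨n - r, faceHom U (by obtain ⟨h1, -⟩ := h; omega : (n - r) + U.card = n)⟩ :
              Σ m : ℕ, (SimplexCategory.mk m ⟶ SimplexCategory.mk n))
            (1 : ℤ)
        else 0 := by
  exact SteenrodAux.main' r (n - r) (by omega)
end

section
/- The assignment X ↦ (C_•(X;R), Δ, ε) is faithful on globular sets: if two morphisms F, G : X → Y of globular sets induce the same coalgebra map C_•(X;R) → C_•(Y;R) (equivalently, the same chain map), and R is nontrivial, then F = G. -/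
open TensorProduct

/-- A morphism of globular sets: a family of maps commuting with sources, targets
and identities. -/
structure GlobularMap (GX GY : GlobularSet) where
  f : ∀ n, GX.X n → GY.X n
  comm_s : ∀ n (x : GX.X (n+1)), f n (GX.s n x) = GY.s n (f (n+1) x)
  comm_t : ∀ n (x : GX.X (n+1)), f n (GX.t n x) = GY.t n (f (n+1) x)
  comm_i : ∀ n (x : GX.X n), f (n+1) (GX.i n x) = GY.i n (f n x)

namespace GlobularSet

/-- The chain map induced by a morphism of globular sets. -/
noncomputable def chainMap {GX GY : GlobularSet} (R : Type) [CommRing R]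
    (F : GlobularMap GX GY) : Chains GX R →ₗ[R] Chains GY R :=
  Finsupp.lift (Chains GY R) R (Σ n, GX.X n)
    (fun p => Finsupp.single ⟨p.1, F.f p.1 p.2⟩ 1)

/-- The submodule of chains spanned by degenerate cells; the quotient by it is the
complex `C_n(X) = R{X_n} / R{i_n(X_{n-1})}`. -/
noncomputable def degenerate (G : GlobularSet) (R : Type) [CommRing R] :
    Submodule R (Chains G R) :=
  Submodule.span R
    (Set.range (fun p : Σ n, G.X n =>
      (Finsupp.single (⟨p.1 + 1, G.i p.1 p.2⟩ : Σ n, G.X n) 1 : Chains G R)))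

end GlobularSet

open GlobularSet in
lemma key_step
    (GX GY : GlobularSet) (R : Type) [CommRing R] [Nontrivial R]
    (F G : GlobularMap GX GY)
    (h : (degenerate GY R).mkQ.comp (chainMap R F) =
         (degenerate GY R).mkQ.comp (chainMap R G))
    (n : ℕ) (x : GX.X n) (hne : F.f n x ≠ G.f n x) :
    ∃ p : Σ m, GY.X m, (⟨n, F.f n x⟩ : Σ m, GY.X m) = ⟨p.1 + 1, GY.i p.1 p.2⟩ := by
  have h1 : (degenerate GY R).mkQ (chainMap R F (Finsupp.single ⟨n, x⟩ 1)) =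
      (degenerate GY R).mkQ (chainMap R G (Finsupp.single ⟨n, x⟩ 1)) := by
    exact congrFun (congrArg (fun f => f.toFun) h) _
  have h2 : chainMap R F (Finsupp.single ⟨n, x⟩ 1)
      - chainMap R G (Finsupp.single ⟨n, x⟩ 1) ∈ degenerate GY R := by
    rwa [← Submodule.Quotient.mk_eq_zero, ← Submodule.mkQ_apply, map_sub, sub_eq_zero]
  have hF : chainMap R F (Finsupp.single (⟨n, x⟩ : Σ m, GX.X m) 1)
      = Finsupp.single (⟨n, F.f n x⟩ : Σ m, GY.X m) 1 := by
    simp [chainMap]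
  have hG : chainMap R G (Finsupp.single (⟨n, x⟩ : Σ m, GX.X m) 1)
      = Finsupp.single (⟨n, G.f n x⟩ : Σ m, GY.X m) 1 := by
    simp [chainMap]
  rw [hF, hG] at h2
  -- degenerate = supported on the degenerate set
  set D : Set (Σ m, GY.X m) :=
    Set.range (fun p : Σ m, GY.X m => (⟨p.1 + 1, GY.i p.1 p.2⟩ : Σ m, GY.X m)) with hD
  have hdeg : degenerate GY R = Finsupp.supported R R D := by
    rw [Finsupp.supported_eq_span_single, degenerate, hD]
    congr 1
    rw [← Set.range_comp]
    rfl
  rw [hdeg, Finsupp.mem_supported] at h2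
  have hmem : (⟨n, F.f n x⟩ : Σ m, GY.X m) ∈ D := by
    apply h2
    simp only [Finset.mem_coe, Finsupp.mem_support_iff]
    have hne' : (⟨n, F.f n x⟩ : Σ m, GY.X m) ≠ ⟨n, G.f n x⟩ := by
      intro hcontra
      exact hne (eq_of_heq (Sigma.mk.inj_iff.mp hcontra).2)
    simp [Finsupp.single_apply, hne', Finsupp.sub_apply, Ne.symm hne']
  obtain ⟨p, hp⟩ := hmem
  exact ⟨p, hp.symm⟩

open GlobularSet in
/-- the functor of chains is faithful on globular sets: if two morphisms
`F, G : X → Y` of globular sets induce the same chain map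
`C_•(X; R) → C_•(Y; R) = R{Y_•}/R{i(Y_•)}` (equivalently, the same coalgebra map) and
`R` is nontrivial, then `F = G`. -/
theorem chains_faithful_on_globular_sets
    (GX GY : GlobularSet) (R : Type) [CommRing R] [Nontrivial R]
    (F G : GlobularMap GX GY)
    (h : (degenerate GY R).mkQ.comp (chainMap R F) =
         (degenerate GY R).mkQ.comp (chainMap R G)) :
    F = G := by
  have hf : ∀ n (x : GX.X n), F.f n x = G.f n x := by
    intro n
    induction n with
    | zero =>
      intro x
      by_contra hne
      obtain ⟨p, hp⟩ := key_step GX GY R F G h 0 x hne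
      exact Nat.succ_ne_zero p.1 (Sigma.mk.inj_iff.mp hp).1.symm
    | succ m ih =>
      intro x
      by_contra hne
      obtain ⟨⟨p1, p2⟩, hp⟩ := key_step GX GY R F G h (m+1) x hne
      have hne' : G.f (m+1) x ≠ F.f (m+1) x := fun e => hne e.symm
      obtain ⟨⟨q1, q2⟩, hq⟩ := key_step GX GY R G F h.symm (m+1) x hne'
      obtain ⟨hp1, hp2⟩ := Sigma.mk.inj_iff.mp hp
      obtain ⟨hq1, hq2⟩ := Sigma.mk.inj_iff.mp hq
      simp only at hp1 hq1 hp2 hq2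
      have hp1' : m = p1 := by omega
      have hq1' : m = q1 := by omega
      subst hp1'
      subst hq1'
      have hFx : F.f (m+1) x = GY.i m p2 := eq_of_heq hp2
      have hGx : G.f (m+1) x = GY.i m q2 := eq_of_heq hq2
      have hyp : p2 = F.f m (GX.s m x) := by
        rw [F.comm_s, hFx, GY.s_i]
      have hyq : q2 = G.f m (GX.s m x) := by
        rw [G.comm_s, hGx, GY.s_i]
      apply hne
      rw [hFx, hGx, hyp, hyq, ih (GX.s m x)]
  obtain ⟨f₁, _, _, _⟩ := F
  obtain ⟨f₂, _, _, _⟩ := G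
  simp only at hf
  have : f₁ = f₂ := funext fun n => funext fun x => hf n x
  subst this
  rfl
end
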